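/- Consider the natural policy gradient update with exact $Q$-function $Q_t$: $\pi_{t+1}(a|s) \propto \pi_t(a|s)\exp(\beta_t Q_t(s,a))$. Then for every state-action pair $(s,a)$, $0 \le [\mathcal{H}(Q_t)](s,a) - [\mathcal{H}_{\pi_{t+1}}(Q_t)](s,a) \le \frac{\gamma}{\beta_t} \max_{s'} \log\left(\frac{1}{\pi_t(a_{t,s'}|s')}\right)$, where $a_{t,s'} \in \arg\max_{a'} Q_t(s',a')$. -/

import Mathlib

open Finset

lemma gibbs_key {A : Type} [Fintype A] [Nonempty A] (w q : A → ℝ)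
    (hw : ∀ a, 0 < w a) (hsum : ∑ a, w a = 1) (β : ℝ) (hβ : 0 < β)
    (am : A) (ham : ∀ a, q a ≤ q am) (V : ℝ)
    (hV : V = ∑ a, (w a * Real.exp (β * q a) / (∑ a', w a' * Real.exp (β * q a'))) * q a) :
    0 ≤ q am - V ∧ q am - V ≤ (1/β) * Real.log (1 / w am) := by
  set Z := ∑ a', w a' * Real.exp (β * q a') with hZ
  have hZpos : 0 < Z :=
    Finset.sum_pos (fun a _ => mul_pos (hw a) (Real.exp_pos _)) univ_nonempty
  set p : A → ℝ := fun a => w a * Real.exp (β * q a) / Z with hp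
  have hppos : ∀ a, 0 < p a := fun a => div_pos (mul_pos (hw a) (Real.exp_pos _)) hZpos
  have hpsum : ∑ a, p a = 1 := by
    simp only [hp]
    rw [← Finset.sum_div, ← hZ, div_self (ne_of_gt hZpos)]
  have hVp : V = ∑ a, p a * q a := hV
  constructor
  · have : V ≤ q am := by
      rw [hVp]
      calc ∑ a, p a * q a ≤ ∑ a, p a * q am :=
            Finset.sum_le_sum fun a _ => mul_le_mul_of_nonneg_left (ham a) (hppos a).le
        _ = q am := by rw [← Finset.sum_mul, hpsum, one_mul]
    linarith
  · have h1 : w am * Real.exp (β * q am) ≤ Z := by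
      rw [hZ]
      exact Finset.single_le_sum (f := fun a => w a * Real.exp (β * q a))
        (fun a _ => (mul_pos (hw a) (Real.exp_pos _)).le) (mem_univ am)
    have h2 : Real.log (w am) + β * q am ≤ Real.log Z := by
      have := Real.log_le_log (mul_pos (hw am) (Real.exp_pos _)) h1
      rwa [Real.log_mul (ne_of_gt (hw am)) (Real.exp_ne_zero _), Real.log_exp] at this
    have gibbs : 0 ≤ ∑ a, p a * Real.log (p a / w a) := by
      have key : ∀ a ∈ Finset.univ, p a - w a ≤ p a * Real.log (p a / w a) := by
        intro a _
        have hx : 0 < w a / p a := div_pos (hw a) (hppos a)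
        have := Real.log_le_sub_one_of_pos hx
        have hlog : Real.log (p a / w a) = - Real.log (w a / p a) := by
          rw [← Real.log_inv, inv_div]
        rw [hlog]
        have : Real.log (w a / p a) ≤ w a / p a - 1 := this
        have h3 : p a * Real.log (w a / p a) ≤ p a * (w a / p a - 1) :=
          mul_le_mul_of_nonneg_left this (hppos a).le
        have h4 : p a * (w a / p a - 1) = w a - p a := by
          rw [mul_sub, mul_one, mul_div_cancel₀ _ (hppos a).ne']
        nlinarith
      have := Finset.sum_le_sum key
      rw [Finset.sum_sub_distrib, hpsum, hsum] at this
      linarith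
    have h3 : Real.log Z ≤ β * V := by
      have heq : ∑ a, p a * Real.log (p a / w a) = β * V - Real.log Z := by
        have : ∀ a, Real.log (p a / w a) = β * q a - Real.log Z := by
          intro a
          have : p a / w a = Real.exp (β * q a) / Z := by
            simp only [hp]
            rw [div_right_comm, mul_div_cancel_left₀ _ (hw a).ne']
          rw [this, Real.log_div (Real.exp_ne_zero _) (ne_of_gt hZpos), Real.log_exp]
        simp_rw [this, mul_sub]
        rw [Finset.sum_sub_distrib, ← Finset.sum_mul, hpsum, one_mul, hVp,
          Finset.mul_sum]
        congr 1
        exact Finset.sum_congr rfl fun a _ => by ring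
      linarith [heq ▸ gibbs]
    have hfin : β * (q am - V) ≤ Real.log (1 / w am) := by
      rw [one_div, Real.log_inv]
      nlinarith
    rw [show (1/β) * Real.log (1 / w am) = Real.log (1 / w am) / β by ring,
      le_div_iff₀ hβ]
    nlinarith


/-- The Bellman operator of a policy `π` on a finite MDP. -/
noncomputable def bellmanPolicy {S A : Type} [Fintype S] [Fintype A]
    (R : S → A → ℝ) (P : S → A → S → ℝ) (γ : ℝ) (π : S → A → ℝ)
    (Q : S × A → ℝ) : S × A → ℝ :=
  fun p => R p.1 p.2 + γ * ∑ s', P p.1 p.2 s' * ∑ a', π s' a' * Q (s', a')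

/-- The Bellman optimality operator on a finite MDP. -/
noncomputable def bellmanOpt {S A : Type} [Fintype S] [Fintype A] [Nonempty A]
    (R : S → A → ℝ) (P : S → A → S → ℝ) (γ : ℝ)
    (Q : S × A → ℝ) : S × A → ℝ :=
  fun p => R p.1 p.2 + γ * ∑ s', P p.1 p.2 s' *
    (Finset.univ.sup' Finset.univ_nonempty (fun a' => Q (s', a')))

theorem stmt_10 {S A : Type} [Fintype S] [Fintype A] [Nonempty S] [Nonempty A]
    (R : S → A → ℝ) (P : S → A → S → ℝ) (γ : ℝ) (hγ : γ ∈ Set.Ioo (0:ℝ) 1)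
    (hPpos : ∀ s a s', 0 ≤ P s a s') (hPsum : ∀ s a, ∑ s', P s a s' = 1)
    (πt : S → A → ℝ) (hπpos : ∀ s a, 0 < πt s a) (hπsum : ∀ s, ∑ a, πt s a = 1)
    (Qt : S × A → ℝ) (βt : ℝ) (hβt : 0 < βt)
    (πt1 : S → A → ℝ)
    (hπt1 : ∀ s a, πt1 s a
      = πt s a * Real.exp (βt * Qt (s, a))
        / ∑ a', πt s a' * Real.exp (βt * Qt (s, a')))
    (ats : S → A) (hats : ∀ s a, Qt (s, a) ≤ Qt (s, ats s)) :
    ∀ p : S × A,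
      0 ≤ bellmanOpt R P γ Qt p - bellmanPolicy R P γ πt1 Qt p
      ∧ bellmanOpt R P γ Qt p - bellmanPolicy R P γ πt1 Qt p
          ≤ (γ / βt) * Finset.univ.sup' Finset.univ_nonempty
              (fun s' => Real.log (1 / πt s' (ats s'))) := by
  intro p
  obtain ⟨s, a⟩ := p
  set B := Finset.univ.sup' Finset.univ_nonempty
    (fun s' => Real.log (1 / πt s' (ats s'))) with hB
  have hM : ∀ s' : S,
      (Finset.univ.sup' Finset.univ_nonempty fun a' => Qt (s', a')) = Qt (s', ats s') :=
    fun s' => le_antisymm (Finset.sup'_le _ _ fun a' _ => hats s' a')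
      (Finset.le_sup' (fun a' => Qt (s', a')) (mem_univ (ats s')))
  have hkey : ∀ s' : S,
      0 ≤ Qt (s', ats s') - ∑ a', πt1 s' a' * Qt (s', a') ∧
      Qt (s', ats s') - ∑ a', πt1 s' a' * Qt (s', a')
        ≤ (1/βt) * Real.log (1 / πt s' (ats s')) := by
    intro s'
    exact gibbs_key (πt s') (fun a' => Qt (s', a')) (hπpos s') (hπsum s') βt hβt
      (ats s') (hats s') _ (Finset.sum_congr rfl fun a' _ => by rw [hπt1])
  have hdiff : bellmanOpt R P γ Qt (s, a) - bellmanPolicy R P γ πt1 Qt (s, a)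
      = γ * ∑ s', P s a s' * (Qt (s', ats s') - ∑ a', πt1 s' a' * Qt (s', a')) := by
    simp only [bellmanOpt, bellmanPolicy, hM]
    have : ∑ s', P s a s' * (Qt (s', ats s') - ∑ a', πt1 s' a' * Qt (s', a'))
        = (∑ s', P s a s' * Qt (s', ats s'))
          - ∑ s', P s a s' * ∑ a', πt1 s' a' * Qt (s', a') := by
      simp only [mul_sub]
      exact Finset.sum_sub_distrib _ _
    rw [this]
    ring
  constructor
  · rw [hdiff]
    exact mul_nonneg hγ.1.le
      (Finset.sum_nonneg fun s' _ => mul_nonneg (hPpos s a s') (hkey s').1)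
  · rw [hdiff]
    have hle : ∀ s' : S, Qt (s', ats s') - ∑ a', πt1 s' a' * Qt (s', a')
        ≤ (1/βt) * B := by
      intro s'
      refine (hkey s').2.trans (mul_le_mul_of_nonneg_left ?_ (by positivity))
      exact Finset.le_sup' (fun s'' => Real.log (1 / πt s'' (ats s''))) (mem_univ s')
    have hstep : ∑ s', P s a s' * (Qt (s', ats s') - ∑ a', πt1 s' a' * Qt (s', a'))
        ≤ ∑ s', P s a s' * ((1/βt) * B) :=
      Finset.sum_le_sum fun s' _ => mul_le_mul_of_nonneg_left (hle s') (hPpos s a s')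
    calc γ * ∑ s', P s a s' * (Qt (s', ats s') - ∑ a', πt1 s' a' * Qt (s', a'))
        ≤ γ * ∑ s', P s a s' * ((1/βt) * B) :=
          mul_le_mul_of_nonneg_left hstep hγ.1.le
      _ = γ / βt * B := by
          rw [← Finset.sum_mul, hPsum]
          ring
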